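/- If the real power series inequality |1 - (1-z)e^z| ≤ |z|^2 holds for |z| ≤ 1, and (α_n) is an increasing sequence of reals with α_1 > 1 and ∑_n 1/α_n^λ < ∞ for every λ > 1, then the infinite product ∏_n (1 - α_n^{-s}) e^{α_n^{-s}} converges to an analytic function of s on the half-plane Re(s) > 1/2 that never vanishes there. -/

import Mathlib

set_option maxHeartbeats 1000000
open Complex Filter

/-- The `n`-th factor of the product. -/
noncomputable def ffac (α : ℕ → ℝ) (n : ℕ) (s : ℂ) : ℂ :=
  (1 - (α n : ℂ) ^ (-s)) * Complex.exp ((α n : ℂ) ^ (-s))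

lemma ffac_norm_cpow {x : ℝ} (hx : 0 < x) (s : ℂ) : ‖(x : ℂ) ^ (-s)‖ = x ^ (-s.re) := by
  rw [Complex.norm_cpow_eq_rpow_re_of_pos hx, Complex.neg_re]

lemma ffac_bound (α : ℕ → ℝ)
    (hineq : ∀ z : ℂ, ‖z‖ ≤ 1 → ‖1 - (1 - z) * Complex.exp z‖ ≤ ‖z‖ ^ 2)
    (hαgt : ∀ n, 1 < α n) (n : ℕ) (s : ℂ) (hs : 0 < s.re) :
    ‖ffac α n s - 1‖ ≤ α n ^ (-(2 * s.re)) := by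
  have hpos : (0:ℝ) < α n := lt_trans one_pos (hαgt n)
  have hz : ‖(α n : ℂ) ^ (-s)‖ = α n ^ (-s.re) := ffac_norm_cpow hpos s
  have hz1 : ‖(α n : ℂ) ^ (-s)‖ ≤ 1 := by
    rw [hz]
    exact le_of_lt (Real.rpow_lt_one_of_one_lt_of_neg (hαgt n) (neg_neg_iff_pos.2 hs))
  have h := hineq _ hz1
  rw [ffac, norm_sub_rev]
  refine le_trans h ?_
  rw [hz, sq, ← Real.rpow_add hpos]
  apply le_of_eq
  ring_nf

lemma ffac_ne_zero (α : ℕ → ℝ) (hαgt : ∀ n, 1 < α n) (n : ℕ) (s : ℂ) (hs : 0 < s.re) :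
    ffac α n s ≠ 0 := by
  have hpos : (0:ℝ) < α n := lt_trans one_pos (hαgt n)
  apply mul_ne_zero ?_ (Complex.exp_ne_zero _)
  have hlt : ‖(α n : ℂ) ^ (-s)‖ < 1 := by
    rw [ffac_norm_cpow hpos s]
    exact Real.rpow_lt_one_of_one_lt_of_neg (hαgt n) (neg_neg_iff_pos.2 hs)
  intro h
  rw [sub_eq_zero] at h
  rw [← h] at hlt
  simp at hlt

lemma log_norm_le {w : ℂ} (h : ‖w - 1‖ ≤ 1/2) : ‖Complex.log w‖ ≤ 3/2 * ‖w - 1‖ := by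
  have := Complex.norm_log_one_add_half_le_self (z := w - 1) h
  rwa [add_sub_cancel] at this

lemma mem_slitPlane_of_close {w : ℂ} (h : ‖w - 1‖ ≤ 1/2) : w ∈ Complex.slitPlane := by
  rw [Complex.mem_slitPlane_iff]
  left
  have h1 : |(w - 1).re| ≤ ‖w - 1‖ := Complex.abs_re_le_norm _
  have h2 : w.re = 1 + (w - 1).re := by simp
  rw [h2]
  have := abs_le.1 h1
  linarith

/-- If `|1 - (1-z)e^z| ≤ |z|^2` for `|z| ≤ 1`, and `(α n)` is an increasing
sequence of reals with `α 0 > 1` and `∑ 1/(α n)^λ < ∞` for every `λ > 1`, then the product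
`∏ (1 - α n ^ (-s)) * exp (α n ^ (-s))` converges to an analytic, nonvanishing function
on `Re s > 1/2`. -/
theorem stmt0 (α : ℕ → ℝ)
    (hineq : ∀ z : ℂ, ‖z‖ ≤ 1 → ‖1 - (1 - z) * Complex.exp z‖ ≤ ‖z‖ ^ 2)
    (hmono : StrictMono α) (hα1 : 1 < α 0)
    (hsum : ∀ l : ℝ, 1 < l → Summable fun n => (α n) ^ (-l)) :
    ∃ F : ℂ → ℂ,
      AnalyticOn ℂ F {s : ℂ | 1 / 2 < s.re} ∧
      (∀ s ∈ {s : ℂ | 1 / 2 < s.re}, F s ≠ 0) ∧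
      (∀ s ∈ {s : ℂ | 1 / 2 < s.re},
        HasProd (fun n => (1 - (α n : ℂ) ^ (-s)) * Complex.exp ((α n : ℂ) ^ (-s))) (F s)) := by
  have hαgt : ∀ n, 1 < α n := fun n => lt_of_lt_of_le hα1 (hmono.monotone (Nat.zero_le n))
  -- summability of the logs
  have hlogsummable : ∀ s : ℂ, 1/2 < s.re → Summable (fun n => Complex.log (ffac α n s)) := by
    intro s hs
    have hl : (1:ℝ) < 2 * s.re := by linarith
    have hsum2 : Summable (fun n => (α n) ^ (-(2 * s.re))) := hsum _ hl
    apply Summable.of_norm_bounded_eventually_nat (g := fun n => 3/2 * (α n) ^ (-(2 * s.re)))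
      (hsum2.mul_left _)
    have hev : ∀ᶠ n in atTop, (α n) ^ (-(2 * s.re)) ≤ 1/2 :=
      hsum2.tendsto_atTop_zero.eventually_le_const (by norm_num)
    filter_upwards [hev] with n hn
    have h1 : ‖ffac α n s - 1‖ ≤ α n ^ (-(2 * s.re)) := ffac_bound α hineq hαgt n s (by linarith)
    calc ‖Complex.log (ffac α n s)‖ ≤ 3/2 * ‖ffac α n s - 1‖ := log_norm_le (le_trans h1 hn)
      _ ≤ 3/2 * α n ^ (-(2 * s.re)) := by linarith
  -- the product converges to the exponential of the sum of logs
  have hprod : ∀ s : ℂ, 1/2 < s.re →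
      HasProd (fun n => ffac α n s) (Complex.exp (∑' n, Complex.log (ffac α n s))) := by
    intro s hs
    have h1 := (hlogsummable s hs).hasSum.cexp
    have h2 : (fun n => Complex.exp (Complex.log (ffac α n s))) = fun n => ffac α n s :=
      funext fun n => Complex.exp_log (ffac_ne_zero α hαgt n s (by linarith))
    simp only [Function.comp_def] at h1
    rwa [h2] at h1
  -- differentiability at each point of the half plane
  have hfd : ∀ n, Differentiable ℂ (ffac α n) := by
    intro n
    have hc : ((α n : ℝ) : ℂ) ≠ 0 :=
      Complex.ofReal_ne_zero.2 (ne_of_gt (lt_trans one_pos (hαgt n)))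
    have hcp : Differentiable ℂ (fun s : ℂ => ((α n : ℝ) : ℂ) ^ (-s)) :=
      fun s => (differentiable_neg s).const_cpow (Or.inl hc)
    exact ((differentiable_const 1).sub hcp).mul hcp.cexp
  have hdiffF : ∀ s₀ ∈ {s : ℂ | 1 / 2 < s.re},
      DifferentiableAt ℂ (fun s => ∏' n, ffac α n s) s₀ := by
    intro s₀ hs₀
    simp only [Set.mem_setOf_eq] at hs₀
    set ε : ℝ := (s₀.re - 1/2)/2 with hε
    have hεpos : 0 < ε := by rw [hε]; linarith
    set l : ℝ := 1 + ε with hl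
    have hl1 : (1:ℝ) < l := by rw [hl]; linarith
    have hre : ∀ s ∈ Metric.ball s₀ ε, l ≤ 2 * s.re := by
      intro s hsb
      have h1 : |(s - s₀).re| ≤ ‖s - s₀‖ := Complex.abs_re_le_norm _
      have h2 : ‖s - s₀‖ < ε := by
        rw [← Complex.dist_eq]; exact Metric.mem_ball.1 hsb
      have h3 := abs_le.1 (le_of_lt (lt_of_le_of_lt h1 h2))
      rw [Complex.sub_re] at h3
      have : s₀.re = 1/2 + 2*ε := by rw [hε]; ring
      rw [hl]
      linarith [h3.1]
    have hspos : ∀ s ∈ Metric.ball s₀ ε, 1/2 < s.re := by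
      intro s hsb
      have := hre s hsb
      linarith
    -- choose N so that the tail factors are close to 1
    obtain ⟨N, hN⟩ : ∃ N, ∀ n ≥ N, (α n) ^ (-l) ≤ 1/2 :=
      eventually_atTop.1 ((hsum l hl1).tendsto_atTop_zero.eventually_le_const (by norm_num))
    have hball_bound : ∀ n, ∀ s ∈ Metric.ball s₀ ε, ‖ffac α n s - 1‖ ≤ α n ^ (-l) := by
      intro n s hsb
      refine le_trans (ffac_bound α hineq hαgt n s (by linarith [hspos s hsb])) ?_
      exact Real.rpow_le_rpow_of_exponent_le (le_of_lt (hαgt n))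
        (neg_le_neg (hre s hsb))
    have htail : ∀ n, ∀ s ∈ Metric.ball s₀ ε, ‖ffac α (n + N) s - 1‖ ≤ 1/2 := fun n s hsb =>
      le_trans (hball_bound (n + N) s hsb) (hN (n + N) (Nat.le_add_left N n))
    -- the tail log-sum is differentiable on the ball
    have hGdiff : DifferentiableOn ℂ
        (fun s => ∑' n, Complex.log (ffac α (n + N) s)) (Metric.ball s₀ ε) := by
      apply differentiableOn_tsum_of_summable_norm
        (u := fun n => 3/2 * (α (n + N)) ^ (-l))
        (((summable_nat_add_iff N).2 (hsum l hl1)).mul_left _)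
        (fun n => ((hfd (n + N)).differentiableOn).clog
          (fun s hsb => mem_slitPlane_of_close (htail n s hsb)))
        Metric.isOpen_ball
      intro n s hsb
      calc ‖Complex.log (ffac α (n + N) s)‖ ≤ 3/2 * ‖ffac α (n + N) s - 1‖ :=
            log_norm_le (htail n s hsb)
        _ ≤ 3/2 * α (n + N) ^ (-l) := by linarith [hball_bound (n + N) s hsb]
    have hHdiff : DifferentiableOn ℂ
        (fun s => (∏ i ∈ Finset.range N, ffac α i s) *
          Complex.exp (∑' n, Complex.log (ffac α (n + N) s))) (Metric.ball s₀ ε) := by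
      exact (DifferentiableOn.fun_finsetProd
        (fun i _ => (hfd i).differentiableOn)).mul hGdiff.cexp
    have hcongr : ∀ s ∈ Metric.ball s₀ ε,
        (∏' n, ffac α n s) = (∏ i ∈ Finset.range N, ffac α i s) *
          Complex.exp (∑' n, Complex.log (ffac α (n + N) s)) := by
      intro s hsb
      have hsU : 1/2 < s.re := hspos s hsb
      have hshiftsum : Summable (fun n => Complex.log (ffac α (n + N) s)) :=
        (summable_nat_add_iff N).2 (hlogsummable s hsU)
      have hshift : HasProd (fun n => ffac α (n + N) s)
          (Complex.exp (∑' n, Complex.log (ffac α (n + N) s))) := by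
        have h1 := hshiftsum.hasSum.cexp
        have h2 : (fun n => Complex.exp (Complex.log (ffac α (n + N) s))) =
            fun n => ffac α (n + N) s :=
          funext fun n => Complex.exp_log (ffac_ne_zero α hαgt (n + N) s (by linarith))
        simp only [Function.comp_def] at h1
        rwa [h2] at h1
      calc (∏' n, ffac α n s)
          = (∏ i ∈ Finset.range N, ffac α i s) * ∏' n, ffac α (n + N) s :=
            (Multipliable.prod_mul_tprod_nat_mul' (f := fun n => ffac α n s) (k := N) ⟨_, hshift⟩).symm
        _ = (∏ i ∈ Finset.range N, ffac α i s) *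
            Complex.exp (∑' n, Complex.log (ffac α (n + N) s)) := by rw [hshift.tprod_eq]
    exact (hHdiff.congr hcongr).differentiableAt
      (Metric.isOpen_ball.mem_nhds (Metric.mem_ball_self hεpos))
  refine ⟨fun s => ∏' n, ffac α n s, ?_, ?_, ?_⟩
  · have hdo : DifferentiableOn ℂ (fun s => ∏' n, ffac α n s) {s : ℂ | 1 / 2 < s.re} :=
      fun s hs => (hdiffF s hs).differentiableWithinAt
    exact hdo.analyticOn (isOpen_lt continuous_const Complex.continuous_re)
  · intro s hs
    simp only [Set.mem_setOf_eq] at hs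
    show (∏' n, ffac α n s) ≠ 0
    rw [(hprod s hs).tprod_eq]
    exact Complex.exp_ne_zero _
  · intro s hs
    simp only [Set.mem_setOf_eq] at hs
    have h := (hprod s hs)
    have h2 := h.multipliable.hasProd
    exact h2
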